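/- Canonical-from-expectation parameters formula for EP(n): with M(η) the n×n matrix with entries M_{i,j}(η) = η_{i+j} (1 ≤ i,j ≤ n) and the moments η_k = E_θ[x^k] of p(·,θ) ∈ EP(n), the vector (θ_1, 2θ_2, ..., nθ_n)ᵀ equals −M(η)⁻¹ · (2η_1, 3η_2, ..., (n+1)η_n)ᵀ, i.e., M(η)·(θ_1, 2θ_2, ..., nθ_n)ᵀ + (2η_1, 3η_2, ..., (n+1)η_n)ᵀ = 0, assuming M(η) is invertible. -/

import Mathlib

open MeasureTheory Real Filter

lemma aux_tail (n m : ℕ) (hn2 : 2 ≤ n) (θ : ℕ → ℝ) (hθn : θ n < 0) (ψ : ℝ) :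
    Tendsto (fun x : ℝ => |x| ^ m *
      Real.exp ((∑ k ∈ Finset.Icc 1 n, θ k * x ^ k) - ψ)) atTop (nhds 0) := by
  set B : ℝ := ∑ k ∈ Finset.Icc 1 (n-1), |θ k| with hB
  -- bounding function
  have hbound : Tendsto (fun x : ℝ => Real.exp (x ^ (n-1) * (θ n * x + (B + m)) - ψ))
      atTop (nhds 0) := by
    apply Real.tendsto_exp_atBot.comp
    apply tendsto_atBot_add_const_right
    apply Tendsto.atTop_mul_atBot₀
    · exact tendsto_pow_atTop (by omega)
    · apply tendsto_atBot_add_const_right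
      have h1 : Tendsto (fun x : ℝ => (-θ n) * x) atTop atTop :=
        Tendsto.const_mul_atTop (by linarith) tendsto_id
      have h2 : (fun x : ℝ => θ n * x) = fun x => -((-θ n) * x) := by
        funext x; ring
      show Tendsto (fun x : ℝ => θ n * x) atTop atBot
      rw [h2]
      exact tendsto_neg_atTop_atBot.comp h1
  apply squeeze_zero' (Eventually.of_forall fun x => by positivity) _ hbound
  filter_upwards [eventually_ge_atTop (1:ℝ)] with x hx1
  have hx0 : (0:ℝ) < x := by linarith
  rw [abs_of_pos hx0, ← Real.exp_log (show (0:ℝ) < x ^ m by positivity), ← Real.exp_add]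
  apply Real.exp_le_exp.2
  rw [Real.log_pow]
  have hlog : Real.log x ≤ x := by
    have := Real.log_le_sub_one_of_pos hx0
    linarith
  have hsplit : ∑ k ∈ Finset.Icc 1 n, θ k * x ^ k
      = (∑ k ∈ Finset.Icc 1 (n-1), θ k * x ^ k) + θ n * x ^ n := by
    have : n = (n-1) + 1 := by omega
    rw [this, Finset.sum_Icc_succ_top (by omega)]
    rw [← this]
  have hsum : ∑ k ∈ Finset.Icc 1 (n-1), θ k * x ^ k ≤ B * x ^ (n-1) := by
    rw [hB, Finset.sum_mul]
    apply Finset.sum_le_sum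
    intro k hk
    simp only [Finset.mem_Icc] at hk
    have hxk : x ^ k ≤ x ^ (n-1) := pow_le_pow_right₀ hx1 (by omega)
    have : θ k * x ^ k ≤ |θ k| * x ^ k := by
      apply mul_le_mul_of_nonneg_right (le_abs_self _) (by positivity)
    calc θ k * x ^ k ≤ |θ k| * x ^ k := this
      _ ≤ |θ k| * x ^ (n-1) := by
          apply mul_le_mul_of_nonneg_left hxk (abs_nonneg _)
  have hmlog : (m : ℝ) * Real.log x ≤ (m : ℝ) * x ^ (n-1) := by
    have hxx : x ≤ x ^ (n-1) := by
      calc x = x ^ 1 := (pow_one x).symm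
        _ ≤ x ^ (n-1) := pow_le_pow_right₀ hx1 (by omega)
    have : Real.log x ≤ x ^ (n-1) := hlog.trans hxx
    exact mul_le_mul_of_nonneg_left this (Nat.cast_nonneg m)
  have hxpow : x ^ n = x ^ (n-1) * x := by
    rw [← pow_succ]
    congr 1
    omega
  have hxn : θ n * x ^ n = x ^ (n-1) * (θ n * x) := by
    rw [hxpow]; ring
  rw [hsplit]
  have : x ^ (n-1) * (θ n * x + (B + m)) - ψ
      = (m : ℝ) * x ^ (n-1) + (B * x ^ (n-1) + x ^ (n-1) * (θ n * x)) - ψ := by ring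
  rw [this, hxn]
  linarith

lemma aux_tail_bot (n m : ℕ) (hn2 : 2 ≤ n) (hEven : Even n) (θ : ℕ → ℝ) (hθn : θ n < 0) (ψ : ℝ) :
    Tendsto (fun x : ℝ => |x| ^ m *
      Real.exp ((∑ k ∈ Finset.Icc 1 n, θ k * x ^ k) - ψ)) atBot (nhds 0) := by
  have h := aux_tail n m hn2 (fun k => θ k * (-1) ^ k)
    (by simpa [hEven.neg_one_pow] using hθn) ψ
  have h2 := h.comp tendsto_neg_atBot_atTop
  convert h2 using 2 with x
  simp only [Function.comp]
  congr 1
  · rw [abs_neg]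
  · congr 2
    apply Finset.sum_congr rfl
    intro k _
    rw [neg_pow]
    ring_nf
    rw [pow_mul', neg_one_sq, one_pow, mul_one]

lemma recursion (n i : ℕ) (hn2 : 2 ≤ n) (hEven : Even n)
    (θ : ℕ → ℝ) (hθn : θ n < 0) (ψ : ℝ) (p : ℝ → ℝ)
    (hp : ∀ x : ℝ, p x = Real.exp ((∑ k ∈ Finset.Icc 1 n, θ k * x ^ k) - ψ))
    (hint : ∀ k : ℕ, Integrable (fun x : ℝ => x ^ k * p x)) :
    ((i : ℝ) + 2) * (∫ x : ℝ, x ^ (i+1) * p x)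
      + ∑ k ∈ Finset.Icc 1 n, ((k : ℝ) * θ k) * ∫ x : ℝ, x ^ (i+1+k) * p x = 0 := by
  set f : ℝ → ℝ := fun x => x ^ (i+2) * p x with hf
  set g : ℝ → ℝ := fun x => ((i : ℝ) + 2) * (x ^ (i+1) * p x)
      + ∑ k ∈ Finset.Icc 1 n, ((k : ℝ) * θ k) * (x ^ (i+1+k) * p x) with hg
  have hpe : p = fun x => Real.exp ((∑ k ∈ Finset.Icc 1 n, θ k * x ^ k) - ψ) :=
    funext hp
  have hppos : ∀ x, 0 < p x := fun x => by rw [hp]; exact Real.exp_pos _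
  have hderiv : ∀ x : ℝ, HasDerivAt f (g x) x := by
    intro x
    have hS : HasDerivAt (fun x : ℝ => ∑ k ∈ Finset.Icc 1 n, θ k * x ^ k)
        (∑ k ∈ Finset.Icc 1 n, θ k * ((k : ℝ) * x ^ (k-1))) x :=
      HasDerivAt.fun_sum fun k _ => (hasDerivAt_pow k x).const_mul (θ k)
    have hp' : HasDerivAt p
        (p x * (∑ k ∈ Finset.Icc 1 n, θ k * ((k : ℝ) * x ^ (k-1)))) x := by
      rw [hpe]
      have := ((hS.sub_const ψ).exp)
      simpa using this
    have hfd := (hasDerivAt_pow (i+2) x).mul hp'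
    refine hfd.congr_deriv (Eq.symm ?_)
    rw [hg]
    have hsum : x ^ (i+2) * (p x * (∑ k ∈ Finset.Icc 1 n, θ k * ((k : ℝ) * x ^ (k-1))))
        = ∑ k ∈ Finset.Icc 1 n, ((k : ℝ) * θ k) * (x ^ (i+1+k) * p x) := by
      rw [Finset.mul_sum, Finset.mul_sum]
      apply Finset.sum_congr rfl
      intro k hk
      have hk1 : 1 ≤ k := (Finset.mem_Icc.mp hk).1
      have hxp : x ^ (i+1+k) = x ^ (k-1) * x ^ (i+2) := by
        rw [← pow_add]; congr 1; omega
      rw [hxp]; ring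
    rw [hsum]
    have hxp2 : x ^ (i + 2 - 1) = x ^ (i+1) := by congr 1
    rw [hxp2]
    push_cast
    ring
  have hintg : Integrable g := by
    apply Integrable.add
    · exact (hint (i+1)).const_mul _
    · exact integrable_finset_sum _ fun k _ => (hint (i+1+k)).const_mul _
  have habs : ∀ x : ℝ, ‖f x‖ ≤ |x| ^ (i+2) *
      Real.exp ((∑ k ∈ Finset.Icc 1 n, θ k * x ^ k) - ψ) := by
    intro x
    rw [hf]
    simp only [Real.norm_eq_abs, abs_mul, abs_pow]
    rw [hp x, abs_of_pos (Real.exp_pos _)]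
  have htop : Tendsto f atTop (nhds 0) :=
    squeeze_zero_norm habs (aux_tail n (i+2) hn2 θ hθn ψ)
  have hbot : Tendsto f atBot (nhds 0) :=
    squeeze_zero_norm habs (aux_tail_bot n (i+2) hn2 hEven θ hθn ψ)
  have hFTC := integral_of_hasDerivAt_of_tendsto hderiv hintg hbot htop
  rw [sub_zero] at hFTC
  rw [show (∫ x : ℝ, g x) = ((i : ℝ) + 2) * (∫ x : ℝ, x ^ (i+1) * p x)
      + ∑ k ∈ Finset.Icc 1 n, ((k : ℝ) * θ k) * ∫ x : ℝ, x ^ (i+1+k) * p x from ?_] at hFTC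
  · exact hFTC
  rw [hg]
  rw [integral_add ((hint (i+1)).const_mul _)
      (integrable_finset_sum _ fun k _ => (hint (i+1+k)).const_mul _)]
  rw [integral_const_mul, integral_finset_sum _ fun k _ => (hint (i+1+k)).const_mul _]
  congr 1
  exact Finset.sum_congr rfl fun k _ => integral_const_mul _ _

/-- Canonical-from-expectation parameters formula for EP(n): with
`M_{i,j}(η) = η_{i+j}` (1 ≤ i,j ≤ n) and the moments `η_k = E_θ[x^k]`,
`M(η)·(θ_1, 2θ_2, ..., nθ_n)ᵀ + (2η_1, 3η_2, ..., (n+1)η_n)ᵀ = 0`, and, `M(η)`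
being invertible, `(θ_1, 2θ_2, ..., nθ_n)ᵀ = −M(η)⁻¹·(2η_1, 3η_2, ..., (n+1)η_n)ᵀ`. -/
theorem stmt7 (n : ℕ) (hn : Even n) (hn0 : 0 < n)
    (θ : ℕ → ℝ) (hθn : θ n < 0)
    (ψ : ℝ) (p : ℝ → ℝ)
    (hp : ∀ x : ℝ, p x = Real.exp ((∑ k ∈ Finset.Icc 1 n, θ k * x ^ k) - ψ))
    (hnorm : ∫ x : ℝ, p x = 1)
    (hint : ∀ k : ℕ, Integrable (fun x : ℝ => x ^ k * p x))
    (η : ℕ → ℝ) (hη : ∀ k, η k = ∫ x : ℝ, x ^ k * p x)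
    (M : Matrix (Fin n) (Fin n) ℝ)
    (hM : ∀ i j : Fin n, M i j = η (((i : ℕ) + 1) + ((j : ℕ) + 1)))
    (hMinv : IsUnit M.det) :
    M.mulVec (fun j : Fin n => ((j : ℕ) + 1 : ℝ) * θ ((j : ℕ) + 1))
        + (fun i : Fin n => ((i : ℕ) + 2 : ℝ) * η ((i : ℕ) + 1)) = 0 ∧
    (fun j : Fin n => ((j : ℕ) + 1 : ℝ) * θ ((j : ℕ) + 1))
        = -(M⁻¹.mulVec fun i : Fin n => ((i : ℕ) + 2 : ℝ) * η ((i : ℕ) + 1)) := by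
  have hn2 : 2 ≤ n := by
    rcases hn with ⟨m, hm⟩; omega
  have key : M.mulVec (fun j : Fin n => ((j : ℕ) + 1 : ℝ) * θ ((j : ℕ) + 1))
      + (fun i : Fin n => ((i : ℕ) + 2 : ℝ) * η ((i : ℕ) + 1)) = 0 := by
    funext i
    have hrec := recursion n (i : ℕ) hn2 hn θ hθn ψ p hp hint
    simp only [← hη] at hrec
    have hIcc : ∑ k ∈ Finset.Icc 1 n, ((k : ℝ) * θ k) * η ((i : ℕ) + 1 + k)
        = ∑ j : Fin n, η (((i : ℕ) + 1) + ((j : ℕ) + 1)) * (((j : ℕ) + 1 : ℝ) * θ ((j : ℕ) + 1)) := by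
      rw [Fin.sum_univ_eq_sum_range
        (fun j => η (((i : ℕ) + 1) + (j + 1)) * (((j : ℝ) + 1) * θ (j + 1))) n]
      refine Finset.sum_nbij' (i := fun k => k - 1) (j := fun k => k + 1)
        ?_ ?_ ?_ ?_ ?_
      · intro a ha
        simp only [Finset.mem_Icc] at ha
        simp only [Finset.mem_range]
        omega
      · intro a ha
        simp only [Finset.mem_range] at ha
        simp only [Finset.mem_Icc]
        omega
      · intro a ha
        simp only [Finset.mem_Icc] at ha
        show a - 1 + 1 = a
        omega
      · intro a _
        show a + 1 - 1 = a
        omega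
      · intro a ha
        simp only [Finset.mem_Icc] at ha
        have h1 : a - 1 + 1 = a := by omega
        rw [h1]
        have h2 : ((a - 1 : ℕ) : ℝ) + 1 = (a : ℝ) := by
          have : ((a - 1 : ℕ) : ℝ) = (a : ℝ) - 1 := by
            push_cast [ha.1]; ring
          rw [this]; ring
        rw [h2]
        ring
    have hentry : M.mulVec (fun j : Fin n => ((j : ℕ) + 1 : ℝ) * θ ((j : ℕ) + 1)) i
        = ∑ j : Fin n, η (((i : ℕ) + 1) + ((j : ℕ) + 1)) * (((j : ℕ) + 1 : ℝ) * θ ((j : ℕ) + 1)) := by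
      simp only [Matrix.mulVec, dotProduct, hM]
    simp only [Pi.add_apply, Pi.zero_apply, hentry, ← hIcc]
    linarith
  refine ⟨key, ?_⟩
  have h1 : M.mulVec (fun j : Fin n => ((j : ℕ) + 1 : ℝ) * θ ((j : ℕ) + 1))
      = -(fun i : Fin n => ((i : ℕ) + 2 : ℝ) * η ((i : ℕ) + 1)) :=
    eq_neg_of_add_eq_zero_left key
  calc (fun j : Fin n => ((j : ℕ) + 1 : ℝ) * θ ((j : ℕ) + 1))
      = M⁻¹.mulVec (M.mulVec (fun j : Fin n => ((j : ℕ) + 1 : ℝ) * θ ((j : ℕ) + 1))) := by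
        rw [Matrix.mulVec_mulVec, Matrix.nonsing_inv_mul M hMinv, Matrix.one_mulVec]
    _ = -(M⁻¹.mulVec fun i : Fin n => ((i : ℕ) + 2 : ℝ) * η ((i : ℕ) + 1)) := by
        rw [h1, Matrix.mulVec_neg]
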